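/- Let X be a topological space and let A and B be nonempty closed subsets of X with B ⊆ A. Suppose that the pair (X, A) has the homotopy extension property and that B is a strong deformation retract of A. Then the pointed quotient spaces (X/A, [A]) and (X/B, [B]) are pointed homotopy equivalent, i.e., there exist continuous maps f : X/A → X/B and g : X/B → X/A with f([A]) = [B] and g([B]) = [A] such that g ∘ f is homotopic to the identity of X/A relative to {[A]} and f ∘ g is homotopic to the identity of X/B relative to {[B]}. -/

import Mathlib

open unitInterval

/-- The setoid on `X` identifying all points of `A` with one another. The quotient
`Quotient (collapseSetoid A)` is the space `X/A` obtained by collapsing `A` to a point. -/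
def collapseSetoid {X : Type*} (A : Set X) : Setoid X where
  r x y := x = y ∨ (x ∈ A ∧ y ∈ A)
  iseqv := by
    refine ⟨fun x => Or.inl rfl, ?_, ?_⟩
    · rintro x y (rfl | ⟨hx, hy⟩)
      · exact Or.inl rfl
      · exact Or.inr ⟨hy, hx⟩
    · rintro x y z (rfl | ⟨hx, hy⟩) (rfl | ⟨hy', hz⟩)
      · exact Or.inl rfl
      · exact Or.inr ⟨hy', hz⟩
      · exact Or.inr ⟨hx, hy⟩
      · exact Or.inr ⟨hx, hz⟩

/-- The pair `(X, A)` has the homotopy extension property: every continuous map defined on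
`(X × {0}) ∪ (A × I)` (with the subspace topology from `X × I`) into any space `Y` extends
to a continuous map on `X × I`. -/
def HasHEP.{u} {X : Type*} [TopologicalSpace X] (A : Set X) : Prop :=
  ∀ (Y : Type u) [TopologicalSpace Y]
    (F : ↥((Set.univ ×ˢ ({0} : Set I)) ∪ (A ×ˢ (Set.univ : Set I))) → Y),
    Continuous F →
    ∃ F' : X × I → Y, Continuous F' ∧
      ∀ p : ↥((Set.univ ×ˢ ({0} : Set I)) ∪ (A ×ˢ (Set.univ : Set I))), F' (p : X × I) = F p

/-- `B` is a strong deformation retract of `A`: there is a homotopy `H : A × I → A` with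
`H(a,0) = a`, `H(a,1) ∈ B`, and `H(b,t) = b` for all `b ∈ B`, `t ∈ I`. -/
def IsStrongDeformationRetract {X : Type*} [TopologicalSpace X] (A B : Set X) : Prop :=
  ∃ H : ↥A × I → ↥A, Continuous H ∧
    (∀ a : ↥A, H (a, 0) = a) ∧
    (∀ a : ↥A, ((H (a, 1) : ↥A) : X) ∈ B) ∧
    (∀ (b : ↥A) (t : I), (b : X) ∈ B → H (b, t) = b)


private lemma continuousOn_union_closed {α β : Type*} [TopologicalSpace α] [TopologicalSpace β]
    {f : α → β} {s t : Set α} (hs : IsClosed s) (ht : IsClosed t)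
    (hfs : ContinuousOn f s) (hft : ContinuousOn f t) : ContinuousOn f (s ∪ t) := by
  intro x hx
  have h1 : ContinuousWithinAt f s x := by
    by_cases h : x ∈ s
    · exact hfs x h
    · exact continuousWithinAt_of_notMem_closure (by rwa [hs.closure_eq])
  have h2 : ContinuousWithinAt f t x := by
    by_cases h : x ∈ t
    · exact hft x h
    · exact continuousWithinAt_of_notMem_closure (by rwa [ht.closure_eq])
  exact h1.union h2

/-- if `(X, A)` has the homotopy extension property and `B ⊆ A` is a strong
deformation retract of `A` (both nonempty and closed), then the pointed quotient spaces
`(X/A, [A])` and `(X/B, [B])` are pointed homotopy equivalent, via maps `f, g` with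
`f([A]) = [B]`, `g([B]) = [A]`, and homotopies rel the base points. -/
theorem collapse_pointed_homotopy_equiv.{u, v} {X : Type v} [TopologicalSpace X]
    (A B : Set X) (hAne : A.Nonempty) (hBne : B.Nonempty)
    (hAc : IsClosed A) (hBc : IsClosed B) (hBA : B ⊆ A)
    (hHEP : HasHEP.{max u v} A)
    (hSDR : IsStrongDeformationRetract A B)
    (a₀ : X) (ha₀ : a₀ ∈ A) (b₀ : X) (hb₀ : b₀ ∈ B) :
    ∃ (f : C(Quotient (collapseSetoid A), Quotient (collapseSetoid B)))
      (g : C(Quotient (collapseSetoid B), Quotient (collapseSetoid A))),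
      f (Quotient.mk (collapseSetoid A) a₀) = Quotient.mk (collapseSetoid B) b₀ ∧
      g (Quotient.mk (collapseSetoid B) b₀) = Quotient.mk (collapseSetoid A) a₀ ∧
      Nonempty ((g.comp f).HomotopyRel (ContinuousMap.id _)
        {Quotient.mk (collapseSetoid A) a₀}) ∧
      Nonempty ((f.comp g).HomotopyRel (ContinuousMap.id _)
        {Quotient.mk (collapseSetoid B) b₀}) := by
  classical
  obtain ⟨H, Hc, H0, H1, Hb⟩ := hSDR
  set S : Set (X × I) := (Set.univ ×ˢ ({0} : Set I)) ∪ (A ×ˢ (Set.univ : Set I)) with hS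
  set H'' : X × I → X := fun p => if h : p.1 ∈ A then (H (⟨p.1, h⟩, p.2) : X) else p.1 with hH''
  have hcont2 : ContinuousOn H'' (A ×ˢ (Set.univ : Set I)) := by
    rw [continuousOn_iff_continuous_restrict]
    have heq : (A ×ˢ (Set.univ : Set I)).domRestrict H''
        = fun q : ↥(A ×ˢ (Set.univ : Set I)) => (H (⟨(q : X × I).1, q.2.1⟩, (q : X × I).2) : X) := by
      funext q
      simp only [Set.domRestrict_apply, hH'', dif_pos q.2.1]
    rw [heq]
    exact continuous_subtype_val.comp (Hc.comp
      (((continuous_fst.comp continuous_subtype_val).subtype_mk _).prodMk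
        (continuous_snd.comp continuous_subtype_val)))
  have hcont1 : ContinuousOn H'' (Set.univ ×ˢ ({0} : Set I)) := by
    rw [continuousOn_iff_continuous_restrict]
    have heq : (Set.univ ×ˢ ({0} : Set I)).domRestrict H''
        = fun q : ↥(Set.univ ×ˢ ({0} : Set I)) => (q : X × I).1 := by
      funext q
      have h0 : (q : X × I).2 = 0 := q.2.2
      by_cases h : (q : X × I).1 ∈ A
      · simp only [Set.domRestrict_apply, hH'', dif_pos h, h0]
        exact congrArg Subtype.val (H0 ⟨(q : X × I).1, h⟩)
      · simp only [Set.domRestrict_apply, hH'', dif_neg h]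
    rw [heq]
    exact continuous_fst.comp continuous_subtype_val
  have hcontS : ContinuousOn H'' S := continuousOn_union_closed
    (isClosed_univ.prod isClosed_singleton) (hAc.prod isClosed_univ) hcont1 hcont2
  obtain ⟨G', G'c, G'eq⟩ := hHEP (ULift.{u} X)
    (fun p => ULift.up (H'' p))
    (continuous_uliftUp.comp (continuousOn_iff_continuous_restrict.mp hcontS))
  set G : X × I → X := fun p => (G' p).down with hG
  have Gc : Continuous G := continuous_uliftDown.comp G'c
  have hGS : ∀ p ∈ S, G p = H'' p := fun p hp => congrArg ULift.down (G'eq ⟨p, hp⟩)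
  have hG0 : ∀ x : X, G (x, 0) = x := by
    intro x
    have hm : ((x, 0) : X × I) ∈ S := Or.inl ⟨trivial, rfl⟩
    rw [hGS _ hm]
    by_cases h : x ∈ A
    · simp only [hH'', dif_pos h]
      exact congrArg Subtype.val (H0 ⟨x, h⟩)
    · simp only [hH'', dif_neg h]
  have hGA : ∀ (x : X) (hx : x ∈ A) (t : I), G (x, t) = (H (⟨x, hx⟩, t) : X) := by
    intro x hx t
    have hm : ((x, t) : X × I) ∈ S := Or.inr ⟨hx, trivial⟩
    rw [hGS _ hm]
    simp only [hH'', dif_pos hx]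
  have hGmem : ∀ (x : X), x ∈ A → ∀ t : I, G (x, t) ∈ A := by
    intro x hx t
    rw [hGA x hx t]
    exact (H (⟨x, hx⟩, t)).2
  have hG1 : ∀ (x : X), x ∈ A → G (x, 1) ∈ B := by
    intro x hx
    rw [hGA x hx 1]
    exact H1 ⟨x, hx⟩
  have hGB : ∀ (x : X), x ∈ B → ∀ t : I, G (x, t) = x := by
    intro x hx t
    rw [hGA x (hBA hx) t, Hb ⟨x, hBA hx⟩ t hx]
  -- the maps f and g
  have hfwd : ∀ x y : X, (collapseSetoid A).r x y →
      Quotient.mk (collapseSetoid B) (G (x, 1)) = Quotient.mk (collapseSetoid B) (G (y, 1)) := by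
    intro x y h
    rcases h with rfl | ⟨hx, hy⟩
    · rfl
    · exact Quotient.sound (Or.inr ⟨hG1 x hx, hG1 y hy⟩)
  have hbwd : ∀ x y : X, (collapseSetoid B).r x y →
      Quotient.mk (collapseSetoid A) x = Quotient.mk (collapseSetoid A) y := by
    intro x y h
    rcases h with rfl | ⟨hx, hy⟩
    · rfl
    · exact Quotient.sound (Or.inr ⟨hBA hx, hBA hy⟩)
  set f : C(Quotient (collapseSetoid A), Quotient (collapseSetoid B)) :=
    ⟨Quotient.lift (fun x => Quotient.mk (collapseSetoid B) (G (x, 1))) hfwd,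
      Continuous.quotient_lift
        (continuous_quot_mk.comp (Gc.comp (continuous_id.prodMk continuous_const))) hfwd⟩ with hf
  set g : C(Quotient (collapseSetoid B), Quotient (collapseSetoid A)) :=
    ⟨Quotient.lift (fun x => Quotient.mk (collapseSetoid A) x) hbwd,
      Continuous.quotient_lift continuous_quot_mk hbwd⟩ with hg
  -- big homotopies
  set KA : C(X × I, Quotient (collapseSetoid A)) :=
    ⟨fun p => Quotient.mk (collapseSetoid A) (G p), continuous_quot_mk.comp Gc⟩ with hKA
  have hwA : ∀ x y : X, (collapseSetoid A).r x y → KA.curry x = KA.curry y := by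
    intro x y h
    rcases h with rfl | ⟨hx, hy⟩
    · rfl
    · ext t
      exact Quotient.sound (Or.inr ⟨hGmem x hx t, hGmem y hy t⟩)
  set qA : C(Quotient (collapseSetoid A), C(I, Quotient (collapseSetoid A))) :=
    ⟨Quotient.lift (fun x => KA.curry x) hwA, KA.curry.continuous.quotient_lift hwA⟩ with hqA
  set KA3 : C(I × Quotient (collapseSetoid A), Quotient (collapseSetoid A)) :=
    qA.uncurry.comp ⟨Prod.swap, continuous_swap⟩ with hKA3
  have hKA3val : ∀ (t : I) (x : X),
      KA3 (t, Quotient.mk (collapseSetoid A) x) = Quotient.mk (collapseSetoid A) (G (x, t)) :=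
    fun t x => rfl
  have HA : (ContinuousMap.id (Quotient (collapseSetoid A))).HomotopyRel (g.comp f)
      {Quotient.mk (collapseSetoid A) a₀} :=
    { toContinuousMap := KA3
      map_zero_left := by
        intro q
        induction q using Quotient.inductionOn with
        | h x => exact congrArg (Quotient.mk (collapseSetoid A)) (hG0 x)
      map_one_left := by
        intro q
        induction q using Quotient.inductionOn with
        | h x => rfl
      prop' := by
        intro t q hq
        rcases hq with rfl
        show KA3 (t, Quotient.mk (collapseSetoid A) a₀) = Quotient.mk (collapseSetoid A) a₀
        rw [hKA3val]
        exact Quotient.sound (Or.inr ⟨hGmem a₀ ha₀ t, ha₀⟩) }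
  -- homotopy on X/B
  set KB : C(X × I, Quotient (collapseSetoid B)) :=
    ⟨fun p => Quotient.mk (collapseSetoid B) (G p), continuous_quot_mk.comp Gc⟩ with hKB
  have hwB : ∀ x y : X, (collapseSetoid B).r x y → KB.curry x = KB.curry y := by
    intro x y h
    rcases h with rfl | ⟨hx, hy⟩
    · rfl
    · ext t
      show Quotient.mk (collapseSetoid B) (G (x, t)) = Quotient.mk (collapseSetoid B) (G (y, t))
      rw [hGB x hx t, hGB y hy t]
      exact Quotient.sound (Or.inr ⟨hx, hy⟩)
  set qB : C(Quotient (collapseSetoid B), C(I, Quotient (collapseSetoid B))) :=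
    ⟨Quotient.lift (fun x => KB.curry x) hwB, KB.curry.continuous.quotient_lift hwB⟩ with hqB
  set KB3 : C(I × Quotient (collapseSetoid B), Quotient (collapseSetoid B)) :=
    qB.uncurry.comp ⟨Prod.swap, continuous_swap⟩ with hKB3
  have hKB3val : ∀ (t : I) (x : X),
      KB3 (t, Quotient.mk (collapseSetoid B) x) = Quotient.mk (collapseSetoid B) (G (x, t)) :=
    fun t x => rfl
  have HB : (ContinuousMap.id (Quotient (collapseSetoid B))).HomotopyRel (f.comp g)
      {Quotient.mk (collapseSetoid B) b₀} :=
    { toContinuousMap := KB3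
      map_zero_left := by
        intro q
        induction q using Quotient.inductionOn with
        | h x => exact congrArg (Quotient.mk (collapseSetoid B)) (hG0 x)
      map_one_left := by
        intro q
        induction q using Quotient.inductionOn with
        | h x => rfl
      prop' := by
        intro t q hq
        rcases hq with rfl
        show KB3 (t, Quotient.mk (collapseSetoid B) b₀) = Quotient.mk (collapseSetoid B) b₀
        rw [hKB3val]
        exact congrArg (Quotient.mk (collapseSetoid B)) (hGB b₀ hb₀ t) }
  refine ⟨f, g, ?_, ?_, ⟨HA.symm⟩, ⟨HB.symm⟩⟩
  · exact Quotient.sound (Or.inr ⟨hG1 a₀ ha₀, hb₀⟩)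
  · exact Quotient.sound (Or.inr ⟨hBA hb₀, ha₀⟩)
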